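/- The game influence is a nonzugzwang game: for every relevant position G, s^L_1(G) ≥ s^L_2(G) and s^R_1(G) ≥ s^R_2(G); equivalently, Ls(G) ≥ Rs(G). -/

import Mathlib

namespace Influence

open Finset

/-- A position of the game `influence`: a finite directed graph with vertex set `V`,
arc set `A`, and the set `left` of Left (black) vertices; Right's vertices are `V \ left`. -/
structure Pos (α : Type) [DecidableEq α] where
  V : Finset α
  A : Finset (α × α)
  left : Finset α

variable {α : Type} [DecidableEq α]

namespace Pos

/-- The set of Right vertices. -/
def R (G : Pos α) : Finset α := G.V \ G.left

/-- Well-formedness: arcs join vertices, and Left vertices are vertices. -/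
def WF (G : Pos α) : Prop :=
  (∀ p ∈ G.A, p.1 ∈ G.V ∧ p.2 ∈ G.V) ∧ G.left ⊆ G.V

open Classical in
/-- `Succ G x`: vertices reachable from `x` by a directed path (including `x` itself). -/
noncomputable def Succ (G : Pos α) (x : α) : Finset α :=
  G.V.filter (fun z => Relation.ReflTransGen (fun a b => (a, b) ∈ G.A) x z)

open Classical in
/-- `Pred G y`: vertices from which `y` is reachable by a directed path (including `y`). -/
noncomputable def Pred (G : Pos α) (y : α) : Finset α :=
  G.V.filter (fun z => Relation.ReflTransGen (fun a b => (a, b) ∈ G.A) z y)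

open Classical in
noncomputable def ForcL (G : Pos α) : Finset α :=
  G.left.filter (fun x => G.Succ x ⊆ G.left)

open Classical in
noncomputable def ForcR (G : Pos α) : Finset α :=
  G.R.filter (fun y => G.Pred y ⊆ G.R)

noncomputable def Forc (G : Pos α) : Finset α := G.ForcL ∪ G.ForcR

/-- A relevant position: no forced vertices. -/
def Relevant (G : Pos α) : Prop := G.Forc = ∅

/-- The induced subgraph `G ∖ S` on `V(G) \ S`. -/
def erase (G : Pos α) (S : Finset α) : Pos α :=
  ⟨G.V \ S, G.A.filter (fun p => p.1 ∈ G.V \ S ∧ p.2 ∈ G.V \ S), G.left \ S⟩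

open Classical in
/-- The set of vertices removed when playing `x`:  for `x ∈ L`,
`Rmv(G,x) = Succ(G,x) ∪ Forc(G ∖ Succ(G,x))`; for `y ∈ R`,
`Rmv(G,y) = Pred(G,y) ∪ Forc(G ∖ Pred(G,y))`. -/
noncomputable def Rmv (G : Pos α) (x : α) : Finset α :=
  if x ∈ G.left then G.Succ x ∪ (G.erase (G.Succ x)).Forc
  else G.Pred x ∪ (G.erase (G.Pred x)).Forc

/-- The resulting relevant position `G_x` after the move `x`. -/
noncomputable def move (G : Pos α) (x : α) : Pos α := G.erase (G.Rmv x)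

mutual
/-- Auxiliary (fuel-indexed) score of Left playing first. -/
noncomputable def sL1Aux : ℕ → Pos α → ℕ
  | 0, _ => 0
  | k + 1, G =>
      if G.left.Nonempty then
        G.left.sup (fun x => (G.Rmv x).card + sL2Aux k (G.move x))
      else 0

/-- Auxiliary (fuel-indexed) score of Left playing second. -/
noncomputable def sL2Aux : ℕ → Pos α → ℕ
  | 0, _ => 0
  | k + 1, G =>
      if h : G.R.Nonempty then G.R.inf' h (fun y => sL1Aux k (G.move y))
      else 0
end

mutual
/-- Auxiliary (fuel-indexed) score of Right playing first. -/
noncomputable def sR1Aux : ℕ → Pos α → ℕ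
  | 0, _ => 0
  | k + 1, G =>
      if G.R.Nonempty then
        G.R.sup (fun y => (G.Rmv y).card + sR2Aux k (G.move y))
      else 0

/-- Auxiliary (fuel-indexed) score of Right playing second. -/
noncomputable def sR2Aux : ℕ → Pos α → ℕ
  | 0, _ => 0
  | k + 1, G =>
      if h : G.left.Nonempty then G.left.inf' h (fun x => sR1Aux k (G.move x))
      else 0
end

/-- `s^L_1(G)`: the score of Left when Left plays first (optimal play). -/
noncomputable def sL1 (G : Pos α) : ℕ := sL1Aux G.V.card G

/-- `s^L_2(G)`: the score of Left when Right plays first (optimal play). -/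
noncomputable def sL2 (G : Pos α) : ℕ := sL2Aux G.V.card G

/-- `s^R_1(G)`: the score of Right when Right plays first (optimal play). -/
noncomputable def sR1 (G : Pos α) : ℕ := sR1Aux G.V.card G

/-- `s^R_2(G)`: the score of Right when Left plays first (optimal play). -/
noncomputable def sR2 (G : Pos α) : ℕ := sR2Aux G.V.card G

/-- The Left score `Ls(G) = s^L_1(G) - s^R_2(G)`. -/
noncomputable def Ls (G : Pos α) : ℤ := (G.sL1 : ℤ) - (G.sR2 : ℤ)

/-- The Right score `Rs(G) = s^L_2(G) - s^R_1(G)`. -/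
noncomputable def Rs (G : Pos α) : ℤ := (G.sL2 : ℤ) - (G.sR1 : ℤ)

/-- Disjoint union (game sum) of two positions. -/
def union (G G' : Pos α) : Pos α := ⟨G.V ∪ G'.V, G.A ∪ G'.A, G.left ∪ G'.left⟩

/-- The empty position. -/
protected def empty : Pos α := ⟨∅, ∅, ∅⟩

end Pos

/-- The sum of a finite list of positions. -/
def sumList (l : List (Pos α)) : Pos α := l.foldr Pos.union Pos.empty

open Classical in
/-- `G` is a segment: its vertex set is a set of at least two consecutive integers,
Left's vertices are the even ones, Right's the odd ones, and there is an arc from each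
even vertex to each of its (odd) neighbours `±1` lying in the vertex set. -/
def IsSegment (G : Pos ℤ) : Prop :=
  2 ≤ G.V.card ∧
  (∀ i j k : ℤ, i ∈ G.V → j ∈ G.V → i ≤ k → k ≤ j → k ∈ G.V) ∧
  G.left = G.V.filter (fun n => Even n) ∧
  G.A = (G.V ×ˢ G.V).filter (fun p => Even p.1 ∧ (p.2 = p.1 + 1 ∨ p.2 = p.1 - 1))

/-- `G` is the finite disjoint union (game sum) of the list `l` of segments. -/
def IsSegUnion (G : Pos ℤ) (l : List (Pos ℤ)) : Prop :=
  (∀ H ∈ l, IsSegment H) ∧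
  l.Pairwise (fun H H' => Disjoint H.V H'.V) ∧
  G = sumList l


open Classical in
/-- `G` is an alternated cycle: obtained from a segment `S` with an even number of
vertices by adding the arc `(x, y)` where `x` is the endpoint of `S` in `L` (even) and
`y` the endpoint in `R` (odd). -/
def IsAltCycle (G : Pos ℤ) : Prop :=
  ∃ (S : Pos ℤ) (x y : ℤ), IsSegment S ∧ Even S.V.card ∧
    x ∈ S.V ∧ y ∈ S.V ∧ Even x ∧ ¬ Even y ∧
    (∀ z ∈ S.V, min x y ≤ z ∧ z ≤ max x y) ∧
    G.V = S.V ∧ G.left = S.left ∧ G.A = insert (x, y) S.A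

open Classical in
/-- `T` is (a copy of) the oriented tree `T_n^c`: a rooted tree of depth `n+1`, all arcs
oriented from parent to child, in which every vertex at level `k ≤ n-1` has exactly `3`
children, every vertex at level `n` has exactly `c` children, the leaves (level `n+1`)
are the Right vertices and all other vertices are Left vertices. -/
def IsTnc (n c : ℕ) (T : Pos α) : Prop :=
  T.WF ∧ ∃ lvl : α → ℕ,
    (∀ v ∈ T.V, lvl v ≤ n + 1) ∧
    T.left = T.V.filter (fun v => lvl v ≤ n) ∧
    (∃! r, r ∈ T.V ∧ lvl r = 0) ∧
    (∀ p ∈ T.A, lvl p.2 = lvl p.1 + 1) ∧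
    (∀ v ∈ T.V, 0 < lvl v → ∃! u, (u, v) ∈ T.A) ∧
    (∀ v ∈ T.V, lvl v < n → (T.V.filter (fun w => (v, w) ∈ T.A)).card = 3) ∧
    (∀ v ∈ T.V, lvl v = n → (T.V.filter (fun w => (v, w) ∈ T.A)).card = c)

/-- `J` is (a copy of) `J_n^c`, the disjoint union of two disjoint copies of `T_n^c`. -/
def IsJnc (n c : ℕ) (J : Pos α) : Prop :=
  ∃ T1 T2 : Pos α, IsTnc n c T1 ∧ IsTnc n c T2 ∧ Disjoint T1.V T2.V ∧ J = T1.union T2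

end Influence

open Influence Influence.Pos Finset

namespace Influence
namespace Pos

variable {α : Type} [DecidableEq α]

/-- The arc relation of a position. -/
def arc (G : Pos α) (a b : α) : Prop := (a, b) ∈ G.A

lemma mem_Succ {G : Pos α} {x z : α} :
    z ∈ G.Succ x ↔ z ∈ G.V ∧ Relation.ReflTransGen G.arc x z := by
  classical
  unfold Succ; rw [Finset.mem_filter]; exact Iff.rfl

lemma mem_Pred {G : Pos α} {y z : α} :
    z ∈ G.Pred y ↔ z ∈ G.V ∧ Relation.ReflTransGen G.arc z y := by
  classical
  unfold Pred; rw [Finset.mem_filter]; exact Iff.rfl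

lemma Succ_subset_V {G : Pos α} {x : α} : G.Succ x ⊆ G.V := fun _ hz => (mem_Succ.1 hz).1
lemma Pred_subset_V {G : Pos α} {y : α} : G.Pred y ⊆ G.V := fun _ hz => (mem_Pred.1 hz).1

lemma mem_Succ_self {G : Pos α} {x : α} (hx : x ∈ G.V) : x ∈ G.Succ x :=
  mem_Succ.2 ⟨hx, .refl⟩
lemma mem_Pred_self {G : Pos α} {y : α} (hy : y ∈ G.V) : y ∈ G.Pred y :=
  mem_Pred.2 ⟨hy, .refl⟩

lemma mem_R {G : Pos α} {z : α} : z ∈ G.R ↔ z ∈ G.V ∧ z ∉ G.left := Finset.mem_sdiff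

@[simp] lemma erase_V (G : Pos α) (S : Finset α) : (G.erase S).V = G.V \ S := rfl
@[simp] lemma erase_left (G : Pos α) (S : Finset α) : (G.erase S).left = G.left \ S := rfl

lemma erase_R (G : Pos α) (S : Finset α) : (G.erase S).R = G.R \ S := by
  ext a; simp [R, Finset.mem_sdiff]; tauto

lemma arc_erase {G : Pos α} {S : Finset α} (hwf : G.WF) {a b : α} :
    (G.erase S).arc a b ↔ G.arc a b ∧ a ∉ S ∧ b ∉ S := by
  classical
  constructor
  · intro h
    have h' := Finset.mem_filter.1 h
    exact ⟨h'.1, (Finset.mem_sdiff.1 h'.2.1).2, (Finset.mem_sdiff.1 h'.2.2).2⟩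
  · rintro ⟨h, ha, hb⟩
    exact Finset.mem_filter.2 ⟨h, Finset.mem_sdiff.2 ⟨(hwf.1 _ h).1, ha⟩,
      Finset.mem_sdiff.2 ⟨(hwf.1 _ h).2, hb⟩⟩

lemma WF.erase {G : Pos α} (hwf : G.WF) (S : Finset α) : (G.erase S).WF := by
  constructor
  · intro p hp
    classical
    exact (Finset.mem_filter.1 hp).2
  · intro a ha
    rcases Finset.mem_sdiff.1 ha with ⟨h1, h2⟩
    exact Finset.mem_sdiff.2 ⟨hwf.2 h1, h2⟩

lemma erase_erase (G : Pos α) (S T : Finset α) :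
    (G.erase S).erase T = G.erase (S ∪ T) := by
  classical
  unfold Pos.erase
  congr 1
  · ext a; simp [Finset.mem_sdiff, Finset.mem_union]; tauto
  · ext p; simp [Finset.mem_filter, Finset.mem_sdiff, Finset.mem_union]; tauto
  · ext a; simp [Finset.mem_sdiff, Finset.mem_union]; tauto

lemma erase_congr {G : Pos α} {S T : Finset α} (h : S = T) : G.erase S = G.erase T := by rw [h]

/-- reachability is monotone from an erased graph to the original one. -/
lemma reach_erase_le {G : Pos α} (hwf : G.WF) {S : Finset α} {x z : α}
    (h : Relation.ReflTransGen (G.erase S).arc x z) : Relation.ReflTransGen G.arc x z :=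
  Relation.ReflTransGen.mono (fun _ _ hab => ((arc_erase hwf).1 hab).1) _ _ h

/-- reachability is antitone in the erased set. -/
lemma reach_erase_mono {G : Pos α} (hwf : G.WF) {S T : Finset α} (hST : S ⊆ T) {x z : α}
    (h : Relation.ReflTransGen (G.erase T).arc x z) :
    Relation.ReflTransGen (G.erase S).arc x z := by
  refine Relation.ReflTransGen.mono (fun a b hab => ?_) _ _ h
  rcases (arc_erase hwf).1 hab with ⟨h1, h2, h3⟩
  exact (arc_erase hwf).2 ⟨h1, fun hs => h2 (hST hs), fun hs => h3 (hST hs)⟩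

lemma reach_erase_endpoint {G : Pos α} (hwf : G.WF) {S : Finset α} {x z : α}
    (h : Relation.ReflTransGen (G.erase S).arc x z) (hx : x ∉ S) : z ∉ S := by
  induction h with
  | refl => exact hx
  | tail _ hbc _ => exact ((arc_erase hwf).1 hbc).2.2

/-- Path splitting: a path either survives erasing `S` or passes through `S`. -/
lemma reach_split {G : Pos α} (hwf : G.WF) {S : Finset α} {x z : α}
    (h : Relation.ReflTransGen G.arc x z) (hx : x ∉ S) :
    Relation.ReflTransGen (G.erase S).arc x z ∨
      ∃ s ∈ S, Relation.ReflTransGen G.arc x s ∧ Relation.ReflTransGen G.arc s z := by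
  induction h with
  | refl => exact Or.inl .refl
  | @tail b c hxb hbc ih =>
    rcases ih with hcl | ⟨s, hs, h1, h2⟩
    · by_cases hc : c ∈ S
      · exact Or.inr ⟨c, hc, (reach_erase_le hwf hcl).tail hbc, .refl⟩
      · exact Or.inl (hcl.tail ((arc_erase hwf).2
          ⟨hbc, reach_erase_endpoint hwf hcl hx, hc⟩))
    · exact Or.inr ⟨s, hs, h1, h2.tail hbc⟩

lemma mem_ForcL {G : Pos α} {z : α} :
    z ∈ G.ForcL ↔ z ∈ G.left ∧ G.Succ z ⊆ G.left := by
  classical simp [ForcL, Finset.mem_filter]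

lemma mem_ForcR {G : Pos α} {z : α} :
    z ∈ G.ForcR ↔ z ∈ G.R ∧ G.Pred z ⊆ G.R := by
  classical simp [ForcR, Finset.mem_filter]

lemma mem_Forc {G : Pos α} {z : α} : z ∈ G.Forc ↔ z ∈ G.ForcL ∨ z ∈ G.ForcR :=
  Finset.mem_union

lemma Forc_subset_V {G : Pos α} (hwf : G.WF) : G.Forc ⊆ G.V := by
  intro z hz
  rcases mem_Forc.1 hz with h | h
  · exact hwf.2 (mem_ForcL.1 h).1
  · exact (Finset.mem_sdiff.1 (mem_ForcR.1 h).1).1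

lemma Forc_not_mem {G : Pos α} (hrel : G.Relevant) {z : α} : z ∉ G.Forc := by
  rw [hrel]; exact Finset.notMem_empty z

end Pos
end Influence
namespace Influence
namespace Pos

variable {α : Type} [DecidableEq α]

lemma Rmv_of_left {G : Pos α} {x : α} (hx : x ∈ G.left) :
    G.Rmv x = G.Succ x ∪ (G.erase (G.Succ x)).Forc := if_pos hx

lemma Rmv_of_right {G : Pos α} {x : α} (hx : x ∉ G.left) :
    G.Rmv x = G.Pred x ∪ (G.erase (G.Pred x)).Forc := if_neg hx

lemma Rmv_subset_V {G : Pos α} (hwf : G.WF) (u : α) : G.Rmv u ⊆ G.V := by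
  unfold Rmv
  split <;>
  · refine Finset.union_subset ?_ ((Forc_subset_V (hwf.erase _)).trans ?_)
    · first | exact Succ_subset_V | exact Pred_subset_V
    · rw [erase_V]; exact Finset.sdiff_subset

lemma mem_Rmv_self {G : Pos α} {u : α} (hu : u ∈ G.V) : u ∈ G.Rmv u := by
  unfold Rmv
  split
  · exact Finset.mem_union_left _ (mem_Succ_self hu)
  · exact Finset.mem_union_left _ (mem_Pred_self hu)

lemma move_V (G : Pos α) (u : α) : (G.move u).V = G.V \ G.Rmv u := rfl
lemma move_left (G : Pos α) (u : α) : (G.move u).left = G.left \ G.Rmv u := rfl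
lemma move_R (G : Pos α) (u : α) : (G.move u).R = G.R \ G.Rmv u := erase_R _ _

lemma WF.move {G : Pos α} (hwf : G.WF) (u : α) : (G.move u).WF := hwf.erase _

lemma move_card_lt {G : Pos α} (hwf : G.WF) {u : α} (hu : u ∈ G.V) :
    (G.move u).V.card < G.V.card := by
  rw [move_V]
  refine Finset.card_lt_card ?_
  rw [Finset.ssubset_iff_of_subset Finset.sdiff_subset]
  exact ⟨u, hu, by simp [mem_Rmv_self hu]⟩

/-- Removing the forced vertices of any graph yields a relevant graph. -/
lemma forc_erase_forc {H : Pos α} (hwf : H.WF) : (H.erase H.Forc).Forc = ∅ := by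
  classical
  ext a
  simp only [Finset.notMem_empty, iff_false]
  intro ha
  rcases mem_Forc.1 ha with h | h
  · -- a would be Left-forced in H
    rcases mem_ForcL.1 h with ⟨ha1, ha2⟩
    rcases Finset.mem_sdiff.1 ha1 with ⟨haL, haF⟩
    apply haF
    refine mem_Forc.2 (Or.inl (mem_ForcL.2 ⟨haL, fun w hw => ?_⟩))
    rcases mem_Succ.1 hw with ⟨hwV, hreach⟩
    rcases reach_split hwf hreach haF with hcl | ⟨s, hs, h1, h2⟩
    · have : w ∈ (H.erase H.Forc).Succ a := mem_Succ.2
        ⟨Finset.mem_sdiff.2 ⟨hwV, reach_erase_endpoint hwf hcl haF⟩, hcl⟩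
      exact (Finset.mem_sdiff.1 (ha2 this)).1
    · rcases mem_Forc.1 hs with hsf | hsf
      · exact (mem_ForcL.1 hsf).2 (mem_Succ.2 ⟨hwV, h2⟩)
      · exact absurd (Finset.mem_sdiff.1
          ((mem_ForcR.1 hsf).2 (mem_Pred.2 ⟨hwf.2 haL, h1⟩))).2 (by simp [haL])
  · rcases mem_ForcR.1 h with ⟨ha1, ha2⟩
    rcases Finset.mem_sdiff.1 (erase_R H H.Forc ▸ ha1) with ⟨haR, haF⟩
    apply haF
    refine mem_Forc.2 (Or.inr (mem_ForcR.2 ⟨haR, fun w hw => ?_⟩))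
    rcases mem_Pred.1 hw with ⟨hwV, hreach⟩
    have haS : a ∉ H.Forc := haF
    -- split the path from w to a going *backwards*; use split on forward path from w
    by_cases hwF : w ∈ H.Forc
    · rcases mem_Forc.1 hwF with hwf' | hwf'
      · exact absurd ((mem_ForcL.1 hwf').2 (mem_Succ.2
          ⟨(Finset.mem_sdiff.1 haR).1, hreach⟩)) (Finset.mem_sdiff.1 haR).2
      · exact mem_ForcR.1 hwf' |>.1
    · rcases reach_split hwf hreach hwF with hcl | ⟨s, hs, h1, h2⟩
      · have : w ∈ (H.erase H.Forc).Pred a := mem_Pred.2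
          ⟨Finset.mem_sdiff.2 ⟨hwV, hwF⟩, hcl⟩
        exact (Finset.mem_sdiff.1 (erase_R H H.Forc ▸ (ha2 this))).1
      · rcases mem_Forc.1 hs with hsf | hsf
        · exact absurd ((mem_ForcL.1 hsf).2 (mem_Succ.2
            ⟨(Finset.mem_sdiff.1 haR).1, h2⟩)) (Finset.mem_sdiff.1 haR).2
        · exact (mem_ForcR.1 hsf).2 (mem_Pred.2 ⟨hwV, h1⟩)

lemma move_eq_erase_erase (G : Pos α) (u : α) :
    ∃ B : Finset α, G.move u = (G.erase B).erase ((G.erase B).Forc) ∧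
      (u ∈ G.left → B = G.Succ u) ∧ (u ∉ G.left → B = G.Pred u) := by
  by_cases hu : u ∈ G.left
  · exact ⟨G.Succ u, by rw [move, Rmv_of_left hu, ← erase_erase], fun _ => rfl,
      fun h => absurd hu h⟩
  · exact ⟨G.Pred u, by rw [move, Rmv_of_right hu, ← erase_erase], fun h => absurd h hu,
      fun _ => rfl⟩

lemma Relevant.move {G : Pos α} (hwf : G.WF) (u : α) : (G.move u).Relevant := by
  rcases move_eq_erase_erase G u with ⟨B, hB, -, -⟩
  rw [Relevant, hB]
  exact forc_erase_forc (hwf.erase B)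

end Pos
end Influence
namespace Influence
namespace Pos

variable {α : Type} [DecidableEq α]

lemma aux_succ_eq (k : ℕ) :
    ∀ G : Pos α, G.WF → G.V.card ≤ k →
      (sL1Aux (k+1) G = sL1Aux k G ∧ sL2Aux (k+1) G = sL2Aux k G ∧
       sR1Aux (k+1) G = sR1Aux k G ∧ sR2Aux (k+1) G = sR2Aux k G) := by
  induction k with
  | zero =>
    intro G hwf hcard
    have hV : G.V = ∅ := Finset.card_eq_zero.1 (Nat.le_zero.1 hcard)
    have hL : G.left = ∅ := Finset.eq_empty_of_forall_notMem
      (fun x hx => by simpa [hV] using hwf.2 hx)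
    have hR : G.R = ∅ := by simp [R, hV]
    refine ⟨?_, ?_, ?_, ?_⟩
    · rw [sL1Aux, sL1Aux]; simp [hL]
    · rw [sL2Aux, sL2Aux]; simp [hR]
    · rw [sR1Aux, sR1Aux]; simp [hR]
    · rw [sR2Aux, sR2Aux]; simp [hL]
  | succ k ih =>
    intro G hwf hcard
    have hmv : ∀ u ∈ G.V, (G.move u).V.card ≤ k := fun u hu =>
      Nat.lt_succ_iff.1 (lt_of_lt_of_le (move_card_lt hwf hu) hcard)
    refine ⟨?_, ?_, ?_, ?_⟩
    · rw [sL1Aux, sL1Aux]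
      by_cases h : G.left.Nonempty
      · rw [if_pos h, if_pos h]
        refine Finset.sup_congr rfl (fun x hx => ?_)
        rw [(ih (G.move x) (hwf.move x) (hmv x (hwf.2 hx))).2.1]
      · rw [if_neg h, if_neg h]
    · rw [sL2Aux, sL2Aux]
      by_cases h : G.R.Nonempty
      · rw [dif_pos h, dif_pos h]
        refine Finset.inf'_congr h rfl (fun y hy => ?_)
        rw [(ih (G.move y) (hwf.move y) (hmv y (Finset.mem_sdiff.1 hy).1)).1]
      · rw [dif_neg h, dif_neg h]
    · rw [sR1Aux, sR1Aux]
      by_cases h : G.R.Nonempty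
      · rw [if_pos h, if_pos h]
        refine Finset.sup_congr rfl (fun y hy => ?_)
        rw [(ih (G.move y) (hwf.move y) (hmv y (Finset.mem_sdiff.1 hy).1)).2.2.2]
      · rw [if_neg h, if_neg h]
    · rw [sR2Aux, sR2Aux]
      by_cases h : G.left.Nonempty
      · rw [dif_pos h, dif_pos h]
        refine Finset.inf'_congr h rfl (fun x hx => ?_)
        rw [(ih (G.move x) (hwf.move x) (hmv x (hwf.2 hx))).2.2.1]
      · rw [dif_neg h, dif_neg h]

lemma aux_stab {G : Pos α} (hwf : G.WF) :
    ∀ {k : ℕ}, G.V.card ≤ k →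
      (sL1Aux k G = G.sL1 ∧ sL2Aux k G = G.sL2 ∧
       sR1Aux k G = G.sR1 ∧ sR2Aux k G = G.sR2) := by
  intro k hk
  induction k with
  | zero =>
    have : G.V.card = 0 := Nat.le_zero.1 hk
    simp [sL1, sL2, sR1, sR2, this]
  | succ k ih =>
    rcases Nat.lt_succ_iff_lt_or_eq.1 (Nat.lt_succ_of_le hk) with h | h
    · have hk' := Nat.lt_succ_iff.1 h
      have e := aux_succ_eq k G hwf hk'
      have := ih hk'
      exact ⟨e.1.trans this.1, e.2.1.trans this.2.1, e.2.2.1.trans this.2.2.1,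
        e.2.2.2.trans this.2.2.2⟩
    · simp [sL1, sL2, sR1, sR2, ← h]

lemma sL1_empty {G : Pos α} (h : G.left = ∅) : G.sL1 = 0 := by
  rw [sL1]
  cases hk : G.V.card with
  | zero => rw [sL1Aux]
  | succ k => rw [sL1Aux, if_neg (by simp [h])]

lemma sL2_empty {G : Pos α} (h : G.R = ∅) : G.sL2 = 0 := by
  rw [sL2]
  cases hk : G.V.card with
  | zero => rw [sL2Aux]
  | succ k => rw [sL2Aux, dif_neg (by simp [h])]

lemma sL1_eq {G : Pos α} (hwf : G.WF) (h : G.left.Nonempty) :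
    G.sL1 = G.left.sup (fun x => (G.Rmv x).card + (G.move x).sL2) := by
  obtain ⟨k, hk⟩ : ∃ k, G.V.card = k + 1 :=
    ⟨G.V.card - 1, (Nat.succ_pred_eq_of_pos (Finset.card_pos.2 ⟨_, hwf.2 h.choose_spec⟩)).symm⟩
  rw [sL1, hk, sL1Aux, if_pos h]
  refine Finset.sup_congr rfl (fun x hx => ?_)
  have : (G.move x).V.card ≤ k := by
    have := move_card_lt hwf (hwf.2 hx); omega
  rw [(aux_stab (hwf.move x) this).2.1]

lemma sL2_eq {G : Pos α} (hwf : G.WF) (h : G.R.Nonempty) :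
    G.sL2 = G.R.inf' h (fun y => (G.move y).sL1) := by
  obtain ⟨k, hk⟩ : ∃ k, G.V.card = k + 1 :=
    ⟨G.V.card - 1, (Nat.succ_pred_eq_of_pos
      (Finset.card_pos.2 ⟨_, (Finset.mem_sdiff.1 h.choose_spec).1⟩)).symm⟩
  rw [sL2, hk, sL2Aux, dif_pos h]
  refine Finset.inf'_congr h rfl (fun y hy => ?_)
  have : (G.move y).V.card ≤ k := by
    have := move_card_lt hwf (Finset.mem_sdiff.1 hy).1; omega
  rw [(aux_stab (hwf.move y) this).1]

lemma term_le_sL1 {G : Pos α} (hwf : G.WF) {x : α} (hx : x ∈ G.left) :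
    (G.Rmv x).card + (G.move x).sL2 ≤ G.sL1 := by
  rw [sL1_eq hwf ⟨x, hx⟩]
  exact Finset.le_sup (f := fun x => (G.Rmv x).card + (G.move x).sL2) hx

lemma sL2_le {G : Pos α} (hwf : G.WF) {y : α} (hy : y ∈ G.R) :
    G.sL2 ≤ (G.move y).sL1 := by
  rw [sL2_eq hwf ⟨y, hy⟩]
  exact Finset.inf'_le _ hy

end Pos
end Influence
namespace Influence
namespace Pos

variable {α : Type} [DecidableEq α]

/-- The dual position: arcs reversed, rôles of the players swapped. -/
def op (G : Pos α) : Pos α := ⟨G.V, G.A.image Prod.swap, G.V \ G.left⟩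

@[simp] lemma op_V (G : Pos α) : G.op.V = G.V := rfl
@[simp] lemma op_left (G : Pos α) : G.op.left = G.V \ G.left := rfl
lemma op_R (G : Pos α) (hwf : G.WF) : G.op.R = G.left := by
  rw [R, op_left, op_V, Finset.sdiff_sdiff_eq_self hwf.2]

lemma arc_op {G : Pos α} {a b : α} : G.op.arc a b ↔ G.arc b a := by
  constructor
  · intro h
    rcases Finset.mem_image.1 h with ⟨p, hp, hpe⟩
    have : p = (b, a) := by
      have := congrArg Prod.swap hpe
      simpa using this
    rwa [this] at hp
  · intro h
    exact Finset.mem_image.2 ⟨(b, a), h, rfl⟩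

lemma reach_op {G : Pos α} {a b : α} :
    Relation.ReflTransGen G.op.arc a b ↔ Relation.ReflTransGen G.arc b a := by
  constructor
  · intro h
    exact Relation.reflTransGen_swap.2 (Relation.ReflTransGen.mono (fun _ _ hab => arc_op.1 hab) _ _ h)
  · intro h
    exact Relation.ReflTransGen.mono (fun _ _ hab => arc_op.2 hab) _ _ (Relation.reflTransGen_swap.2 h)

lemma WF.op {G : Pos α} (hwf : G.WF) : G.op.WF := by
  constructor
  · intro p hp
    rcases Finset.mem_image.1 hp with ⟨q, hq, rfl⟩
    exact ⟨(hwf.1 q hq).2, (hwf.1 q hq).1⟩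
  · exact Finset.sdiff_subset

lemma Succ_op (G : Pos α) (x : α) : G.op.Succ x = G.Pred x := by
  ext z; rw [mem_Succ, mem_Pred, op_V, reach_op]

lemma Pred_op (G : Pos α) (x : α) : G.op.Pred x = G.Succ x := by
  ext z; rw [mem_Succ, mem_Pred, op_V, reach_op]

lemma ForcL_op (G : Pos α) : G.op.ForcL = G.ForcR := by
  ext z
  rw [mem_ForcL, mem_ForcR, Succ_op, op_left, R]

lemma ForcR_op (G : Pos α) (hwf : G.WF) : G.op.ForcR = G.ForcL := by
  ext z
  rw [mem_ForcR, mem_ForcL, Pred_op, op_R G hwf]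

lemma Forc_op (G : Pos α) (hwf : G.WF) : G.op.Forc = G.Forc := by
  rw [Forc, Forc, ForcL_op, ForcR_op G hwf, Finset.union_comm]

lemma Relevant.op {G : Pos α} (hwf : G.WF) (hrel : G.Relevant) : G.op.Relevant := by
  rw [Relevant, Forc_op G hwf, hrel]

lemma op_erase (G : Pos α) (S : Finset α) : (G.erase S).op = G.op.erase S := by
  unfold Pos.erase Pos.op
  congr 1
  · ext p
    rcases p with ⟨a, b⟩
    simp only [Finset.mem_image, Finset.mem_filter, Prod.exists, Prod.swap_prod_mk,
      Prod.mk.injEq, Finset.mem_sdiff]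
    constructor
    · rintro ⟨c, d, ⟨h1, h2, h3⟩, rfl, rfl⟩
      exact ⟨⟨c, d, h1, rfl, rfl⟩, h3, h2⟩
    · rintro ⟨⟨c, d, h1, rfl, rfl⟩, h2, h3⟩
      exact ⟨c, d, ⟨h1, h3, h2⟩, rfl, rfl⟩
  · ext a
    simp only [Finset.mem_sdiff]
    tauto

lemma Rmv_op {G : Pos α} (hwf : G.WF) {u : α} (hu : u ∈ G.V) :
    G.op.Rmv u = G.Rmv u := by
  by_cases h : u ∈ G.left
  · have h' : u ∉ G.op.left := by simp [h]
    rw [Rmv_of_right h', Rmv_of_left h, Pred_op, ← op_erase,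
      Forc_op _ (hwf.erase _)]
  · have h' : u ∈ G.op.left := by simp [hu, h]
    rw [Rmv_of_left h', Rmv_of_right h, Succ_op, ← op_erase,
      Forc_op _ (hwf.erase _)]

lemma move_op {G : Pos α} (hwf : G.WF) {u : α} (hu : u ∈ G.V) :
    G.op.move u = (G.move u).op := by
  rw [move, move, Rmv_op hwf hu, op_erase]

lemma aux_op (k : ℕ) :
    ∀ G : Pos α, G.WF →
      (sL1Aux k G.op = sR1Aux k G ∧ sL2Aux k G.op = sR2Aux k G) := by
  induction k with
  | zero => intro G hwf; rw [sL1Aux, sL2Aux, sR1Aux, sR2Aux]; exact ⟨rfl, rfl⟩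
  | succ k ih =>
    intro G hwf
    constructor
    · rw [sL1Aux, sR1Aux]
      have hLR : G.op.left = G.R := rfl
      rw [hLR]
      by_cases h : G.R.Nonempty
      · rw [if_pos h, if_pos h]
        refine Finset.sup_congr rfl (fun y hy => ?_)
        have hyV : y ∈ G.V := (Finset.mem_sdiff.1 hy).1
        rw [Rmv_op hwf hyV, move_op hwf hyV, (ih (G.move y) (hwf.move y)).2]
      · rw [if_neg h, if_neg h]
    · rw [sL2Aux, sR2Aux]
      have hRL : G.op.R = G.left := op_R G hwf
      by_cases h : G.left.Nonempty
      · have h' : G.op.R.Nonempty := by rw [hRL]; exact h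
        rw [dif_pos h', dif_pos h]
        have : ∀ x ∈ G.op.R, sL1Aux k (G.op.move x) = sR1Aux k (G.move x) := by
          intro x hx
          have hxV : x ∈ G.V := hwf.2 (hRL ▸ hx)
          rw [move_op hwf hxV, (ih (G.move x) (hwf.move x)).1]
        rw [Finset.inf'_congr h' (hRL) (fun x hx => this x hx)]
      · have h' : ¬ G.op.R.Nonempty := by rw [hRL]; exact h
        rw [dif_neg h', dif_neg h]

lemma sL1_op {G : Pos α} (hwf : G.WF) : G.op.sL1 = G.sR1 := by
  rw [sL1, sR1, op_V]; exact (aux_op _ G hwf).1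

lemma sL2_op {G : Pos α} (hwf : G.WF) : G.op.sL2 = G.sR2 := by
  rw [sL2, sR2, op_V]; exact (aux_op _ G hwf).2

end Pos
end Influence
namespace Influence
namespace Pos

variable {α : Type} [DecidableEq α]

def PredClosed (G : Pos α) (W : Finset α) : Prop :=
  ∀ ⦃a b : α⦄, b ∈ W → G.arc a b → a ∈ W

def SuccClosed (G : Pos α) (W : Finset α) : Prop :=
  ∀ ⦃a b : α⦄, a ∈ W → G.arc a b → b ∈ W

lemma PredClosed.reach {G : Pos α} {W : Finset α} (h : G.PredClosed W) {a b : α}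
    (hb : b ∈ W) (hr : Relation.ReflTransGen G.arc a b) : a ∈ W := by
  induction hr using Relation.ReflTransGen.head_induction_on with
  | refl => exact hb
  | head hac _ ih => exact h ih hac

lemma predClosed_Pred {G : Pos α} (hwf : G.WF) (u : α) : G.PredClosed (G.Pred u) := by
  intro a b hb hab
  rcases mem_Pred.1 hb with ⟨hbV, hr⟩
  exact mem_Pred.2 ⟨(hwf.1 _ hab).1, Relation.ReflTransGen.head hab hr⟩

lemma predClosed_union {G : Pos α} {W1 W2 : Finset α} (h1 : G.PredClosed W1)
    (h2 : G.PredClosed W2) : G.PredClosed (W1 ∪ W2) := by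
  intro a b hb hab
  rcases Finset.mem_union.1 hb with h | h
  · exact Finset.mem_union_left _ (h1 h hab)
  · exact Finset.mem_union_right _ (h2 h hab)

lemma succClosed_Succ {G : Pos α} (hwf : G.WF) (x : α) : G.SuccClosed (G.Succ x) := by
  intro a b ha hab
  rcases mem_Succ.1 ha with ⟨haV, hr⟩
  exact mem_Succ.2 ⟨(hwf.1 _ hab).2, hr.tail hab⟩

lemma predClosed_op_iff {G : Pos α} {W : Finset α} :
    G.op.PredClosed W ↔ G.SuccClosed W := by
  constructor
  · intro h a b ha hab; exact h ha (arc_op.2 hab)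
  · intro h a b hb hab; exact h hb (arc_op.1 hab)

lemma mem_ForcR_of_not_left {H : Pos α} {c : α} (hc : c ∈ H.Forc) (h : c ∉ H.left) :
    c ∈ H.ForcR := by
  rcases mem_Forc.1 hc with h' | h'
  · exact absurd (mem_ForcL.1 h').1 h
  · exact h'

lemma mem_ForcL_of_left {H : Pos α} {c : α} (hc : c ∈ H.Forc) (h : c ∈ H.left) :
    c ∈ H.ForcL := by
  rcases mem_Forc.1 hc with h' | h'
  · exact h'
  · exact absurd h (mem_R.1 (mem_ForcR.1 h').1).2

/-- In a relevant position, erasing a pred-closed set creates no Left-forced vertices. -/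
lemma forc_erase_not_left {G : Pos α} (hrel : G.Relevant) (hwf : G.WF) {W : Finset α}
    (hW : G.PredClosed W) : ∀ c ∈ (G.erase W).Forc, c ∉ G.left := by
  intro c hc hcl
  rcases mem_Forc.1 hc with hcL | hcR
  swap
  · have := (mem_ForcR.1 hcR).1
    rw [erase_R] at this
    exact (mem_R.1 (Finset.mem_sdiff.1 this).1).2 hcl
  rcases mem_ForcL.1 hcL with ⟨hc1, hc2⟩
  have hcW : c ∉ W := (Finset.mem_sdiff.1 hc1).2
  have : ¬ (G.Succ c ⊆ G.left) := fun hs =>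
    Forc_not_mem hrel (mem_Forc.2 (Or.inl (mem_ForcL.2 ⟨hcl, hs⟩)))
  rcases Finset.not_subset.1 this with ⟨w, hw, hwl⟩
  rcases mem_Succ.1 hw with ⟨hwV, hr⟩
  rcases reach_split hwf hr hcW with hclean | ⟨s, hs, h1, h2⟩
  · have : w ∈ (G.erase W).Succ c := mem_Succ.2
      ⟨Finset.mem_sdiff.2 ⟨hwV, reach_erase_endpoint hwf hclean hcW⟩, hclean⟩
    exact hwl (Finset.mem_sdiff.1 (hc2 this)).1
  · exact hcW (hW.reach hs h1)

/-- dual version: erasing a succ-closed set creates no Right-forced vertices. -/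
lemma forc_erase_in_left {G : Pos α} (hrel : G.Relevant) (hwf : G.WF) {W : Finset α}
    (hW : G.SuccClosed W) : ∀ c ∈ (G.erase W).Forc, c ∈ G.left := by
  intro c hc
  have hop := forc_erase_not_left (hrel.op hwf) hwf.op (W := W)
    (predClosed_op_iff.2 hW) c (by rw [← op_erase, Forc_op _ (hwf.erase W)]; exact hc)
  have hcV : c ∈ G.V := by
    have := Forc_subset_V (hwf.erase W) hc
    exact (Finset.mem_sdiff.1 this).1
  by_contra hcl
  exact hop (by simp [hcV, hcl])

lemma mem_ForcR_of_mem_Rmv {G : Pos α} (hrel : G.Relevant) (hwf : G.WF) {u : α}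
    (hu : u ∈ G.R) {s : α} (h : s ∈ G.Rmv u) (h2 : s ∉ G.Pred u) :
    s ∈ (G.erase (G.Pred u)).ForcR := by
  rw [Rmv_of_right (mem_R.1 hu).2] at h
  rcases Finset.mem_union.1 h with h' | h'
  · exact absurd h' h2
  · exact mem_ForcR_of_not_left h' (by
      rw [erase_left]
      exact fun hh => forc_erase_not_left hrel hwf (predClosed_Pred hwf u) s h'
        (Finset.mem_sdiff.1 hh).1)

lemma mem_ForcL_of_mem_Rmv {G : Pos α} (hrel : G.Relevant) (hwf : G.WF) {x : α}
    (hx : x ∈ G.left) {s : α} (h : s ∈ G.Rmv x) (h2 : s ∉ G.Succ x) :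
    s ∈ (G.erase (G.Succ x)).ForcL := by
  rw [Rmv_of_left hx] at h
  rcases Finset.mem_union.1 h with h' | h'
  · exact absurd h' h2
  · exact mem_ForcL_of_left h' (by
      have := forc_erase_in_left hrel hwf (succClosed_Succ hwf x) s h'
      have hsW : s ∉ G.Succ x := (Finset.mem_sdiff.1 (Forc_subset_V (hwf.erase _) h')).2
      exact Finset.mem_sdiff.2 ⟨this, hsW⟩)

/-- key propagation: a vertex with a `Pred u`-avoiding path to a removed vertex is Right. -/
lemma not_left_of_reach_rmv {G : Pos α} (hrel : G.Relevant) (hwf : G.WF) {u : α}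
    (hu : u ∈ G.R) {z s : α} (hs : s ∈ G.Rmv u) (hsP : s ∉ G.Pred u)
    (hz : z ∈ G.V) (hzP : z ∉ G.Pred u)
    (hr : Relation.ReflTransGen (G.erase (G.Pred u)).arc z s) : z ∉ G.left := by
  have hsF := mem_ForcR_of_mem_Rmv hrel hwf hu hs hsP
  have : z ∈ (G.erase (G.Pred u)).Pred s :=
    mem_Pred.2 ⟨Finset.mem_sdiff.2 ⟨hz, hzP⟩, hr⟩
  have h' := (mem_ForcR.1 hsF).2 this
  rw [erase_R] at h'
  exact (mem_R.1 (Finset.mem_sdiff.1 h').1).2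

/-- variant with a plain path and `z ∉ Rmv u`. -/
lemma not_left_of_reach_rmv' {G : Pos α} (hrel : G.Relevant) (hwf : G.WF) {u : α}
    (hu : u ∈ G.R) {z s : α} (hs : s ∈ G.Rmv u) (hz : z ∈ G.V) (hzR : z ∉ G.Rmv u)
    (hr : Relation.ReflTransGen G.arc z s) : z ∉ G.left := by
  have hPu : G.Pred u ⊆ G.Rmv u := by
    rw [Rmv_of_right (mem_R.1 hu).2]; exact Finset.subset_union_left
  have hzP : z ∉ G.Pred u := fun h => hzR (hPu h)
  have hsP : s ∉ G.Pred u := by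
    intro h
    rcases mem_Pred.1 h with ⟨hsV, hsu⟩
    exact hzR (hPu (mem_Pred.2 ⟨hz, hr.trans hsu⟩))
  rcases reach_split hwf hr hzP with hclean | ⟨t, ht, h1, h2⟩
  · exact not_left_of_reach_rmv hrel hwf hu hs hsP hz hzP hclean
  · rcases mem_Pred.1 ht with ⟨htV, htu⟩
    exact absurd (hPu (mem_Pred.2 ⟨hz, h1.trans htu⟩)) hzR

/-- the removal set of a Right move is pred-closed. -/
lemma predClosed_Rmv {G : Pos α} (hrel : G.Relevant) (hwf : G.WF) {u : α}
    (hu : u ∈ G.R) : G.PredClosed (G.Rmv u) := by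
  intro a b hb hab
  have haV : a ∈ G.V := (hwf.1 _ hab).1
  have hPu : G.Pred u ⊆ G.Rmv u := by
    rw [Rmv_of_right (mem_R.1 hu).2]; exact Finset.subset_union_left
  by_cases hbP : b ∈ G.Pred u
  · rcases mem_Pred.1 hbP with ⟨hbV, hr⟩
    exact hPu (mem_Pred.2 ⟨haV, Relation.ReflTransGen.head hab hr⟩)
  by_cases haP : a ∈ G.Pred u
  · exact hPu haP
  have hbF := mem_ForcR_of_mem_Rmv hrel hwf hu hb hbP
  rcases mem_ForcR.1 hbF with ⟨hb1, hb2⟩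
  have hbV : b ∈ (G.erase (G.Pred u)).V := by
    rw [erase_R] at hb1
    exact Finset.mem_sdiff.2 ⟨(mem_R.1 (Finset.mem_sdiff.1 hb1).1).1,
      (Finset.mem_sdiff.1 hb1).2⟩
  have harc : (G.erase (G.Pred u)).arc a b :=
    (arc_erase hwf).2 ⟨hab, haP, (Finset.mem_sdiff.1 hbV).2⟩
  rw [Rmv_of_right (mem_R.1 hu).2]
  refine Finset.mem_union_right _ (mem_Forc.2 (Or.inr (mem_ForcR.2 ⟨?_, ?_⟩)))
  · exact hb2 (mem_Pred.2 ⟨Finset.mem_sdiff.2 ⟨haV, haP⟩, Relation.ReflTransGen.single harc⟩)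
  · intro e he
    rcases mem_Pred.1 he with ⟨heV, hr⟩
    exact hb2 (mem_Pred.2 ⟨heV, hr.tail harc⟩)

/-- the closure of a set of vertices. -/
noncomputable def Cl (G : Pos α) (W : Finset α) : Finset α := W ∪ (G.erase W).Forc

lemma Rmv_eq_Cl {G : Pos α} {u : α} (hu : u ∉ G.left) : G.Rmv u = G.Cl (G.Pred u) :=
  Rmv_of_right hu

lemma cl_mono {G : Pos α} (hwf : G.WF) {W1 W2 : Finset α} (h12 : W1 ⊆ W2) :
    G.Cl W1 ⊆ G.Cl W2 := by
  intro z hz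
  rcases Finset.mem_union.1 hz with h | h
  · exact Finset.mem_union_left _ (h12 h)
  · by_cases hzW : z ∈ W2
    · exact Finset.mem_union_left _ hzW
    refine Finset.mem_union_right _ ?_
    rcases mem_Forc.1 h with h' | h'
    · rcases mem_ForcL.1 h' with ⟨h1, h2⟩
      refine mem_Forc.2 (Or.inl (mem_ForcL.2 ⟨?_, ?_⟩))
      · exact Finset.mem_sdiff.2 ⟨(Finset.mem_sdiff.1 h1).1, hzW⟩
      · intro w hw
        rcases mem_Succ.1 hw with ⟨hwV, hr⟩
        have hwV' := Finset.mem_sdiff.1 hwV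
        have : w ∈ (G.erase W1).Succ z := mem_Succ.2
          ⟨Finset.mem_sdiff.2 ⟨hwV'.1, fun hh => hwV'.2 (h12 hh)⟩,
            reach_erase_mono hwf h12 hr⟩
        exact Finset.mem_sdiff.2 ⟨(Finset.mem_sdiff.1 (h2 this)).1, hwV'.2⟩
    · rcases mem_ForcR.1 h' with ⟨h1, h2⟩
      refine mem_Forc.2 (Or.inr (mem_ForcR.2 ⟨?_, ?_⟩))
      · rw [erase_R] at h1 ⊢
        exact Finset.mem_sdiff.2 ⟨(Finset.mem_sdiff.1 h1).1, hzW⟩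
      · intro w hw
        rcases mem_Pred.1 hw with ⟨hwV, hr⟩
        have hwV' := Finset.mem_sdiff.1 hwV
        have : w ∈ (G.erase W1).Pred z := mem_Pred.2
          ⟨Finset.mem_sdiff.2 ⟨hwV'.1, fun hh => hwV'.2 (h12 hh)⟩,
            reach_erase_mono hwf h12 hr⟩
        rw [erase_R] at *
        exact Finset.mem_sdiff.2 ⟨(Finset.mem_sdiff.1 (h2 this)).1, hwV'.2⟩

lemma cl_eq {G : Pos α} (hrel : G.Relevant) (hwf : G.WF) {u : α} (hu : u ∈ G.R)
    {W : Finset α} (hPW : G.Pred u ⊆ W) (hWR : W ⊆ G.Rmv u) (hWpc : G.PredClosed W) :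
    G.Cl W = G.Rmv u := by
  apply Finset.Subset.antisymm
  · intro z hz
    rcases Finset.mem_union.1 hz with h | h
    · exact hWR h
    · have hzl : z ∉ G.left := forc_erase_not_left hrel hwf hWpc z h
      have hzF := mem_ForcR_of_not_left h (by
        rw [erase_left]; exact fun hh => hzl (Finset.mem_sdiff.1 hh).1)
      rcases mem_ForcR.1 hzF with ⟨h1, h2⟩
      rw [erase_R] at h1
      rcases Finset.mem_sdiff.1 h1 with ⟨hzR, hzW⟩
      have hzPu : z ∉ G.Pred u := fun hh => hzW (hPW hh)
      rw [Rmv_of_right (mem_R.1 hu).2]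
      refine Finset.mem_union_right _ (mem_Forc.2 (Or.inr (mem_ForcR.2 ⟨?_, ?_⟩)))
      · rw [erase_R]; exact Finset.mem_sdiff.2 ⟨hzR, hzPu⟩
      · intro b hb
        rcases mem_Pred.1 hb with ⟨hbV, hr⟩
        rcases Finset.mem_sdiff.1 hbV with ⟨hbV', hbPu⟩
        rw [erase_R]
        refine Finset.mem_sdiff.2 ⟨mem_R.2 ⟨hbV', ?_⟩, hbPu⟩
        by_cases hbW : b ∈ W
        · exact not_left_of_reach_rmv hrel hwf hu (hWR hbW) (fun hh => hbPu hh) hbV' hbPu .refl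
        · rcases reach_split (hwf.erase (G.Pred u)) hr hbW with hclean | ⟨s, hs, hr1, hr2⟩
          · rw [erase_erase, Finset.union_eq_right.2 hPW] at hclean
            have : b ∈ (G.erase W).Pred z :=
              mem_Pred.2 ⟨Finset.mem_sdiff.2 ⟨hbV', hbW⟩, hclean⟩
            have := h2 this
            rw [erase_R] at this
            exact (mem_R.1 (Finset.mem_sdiff.1 this).1).2
          · have hsPu : s ∉ G.Pred u := reach_erase_endpoint (hwf) hr1 hbPu
            exact not_left_of_reach_rmv hrel hwf hu (hWR hs) hsPu hbV' hbPu hr1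
  · have := cl_mono (G := G) hwf hPW
    rwa [← Rmv_eq_Cl (mem_R.1 hu).2] at this

lemma Rmv_subset_of_mem {G : Pos α} (hrel : G.Relevant) (hwf : G.WF) {u y : α}
    (hu : u ∈ G.R) (hy : y ∈ G.R) (hyu : y ∈ G.Rmv u) : G.Rmv y ⊆ G.Rmv u := by
  have hPy : G.Pred y ⊆ G.Rmv u := by
    intro z hz
    rcases mem_Pred.1 hz with ⟨hzV, hr⟩
    exact (predClosed_Rmv hrel hwf hu).reach hyu hr
  have hPu : G.Pred u ⊆ G.Rmv u := by
    rw [Rmv_of_right (mem_R.1 hu).2]; exact Finset.subset_union_left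
  have hcl := cl_eq hrel hwf hu (W := G.Pred u ∪ G.Pred y)
    Finset.subset_union_left (Finset.union_subset hPu hPy)
    (predClosed_union (predClosed_Pred hwf u) (predClosed_Pred hwf y))
  calc G.Rmv y = G.Cl (G.Pred y) := Rmv_eq_Cl (mem_R.1 hy).2
    _ ⊆ G.Cl (G.Pred u ∪ G.Pred y) := cl_mono hwf Finset.subset_union_right
    _ = G.Rmv u := hcl

end Pos
end Influence
namespace Influence
namespace Pos

variable {α : Type} [DecidableEq α]

lemma move_def (G : Pos α) (u : α) : G.move u = G.erase (G.Rmv u) := rfl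

lemma Pred_subset_Rmv {G : Pos α} {u : α} (hu : u ∉ G.left) : G.Pred u ⊆ G.Rmv u := by
  rw [Rmv_of_right hu]; exact Finset.subset_union_left

lemma Succ_subset_Rmv {G : Pos α} {x : α} (hx : x ∈ G.left) : G.Succ x ⊆ G.Rmv x := by
  rw [Rmv_of_left hx]; exact Finset.subset_union_left

/-- Playing two Right moves in succession removes the closure of the union of the
predecessor sets. -/
lemma clo {G : Pos α} (hrel : G.Relevant) (hwf : G.WF) {a b : α}
    (ha : a ∈ G.R) (hb : b ∈ G.R) (hbRa : b ∉ G.Rmv a) :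
    G.Rmv a ∪ (G.move a).Rmv b = G.Cl (G.Pred a ∪ G.Pred b) := by
  have hwfa : (G.move a).WF := hwf.move a
  have hrela : (G.move a).Relevant := Relevant.move hwf a
  have haV := (mem_R.1 ha).1
  have hbV := (mem_R.1 hb).1
  have hbGaR : b ∈ (G.move a).R := by
    rw [move_R]; exact Finset.mem_sdiff.2 ⟨hb, hbRa⟩
  have hbGal : b ∉ (G.move a).left := (mem_R.1 hbGaR).2
  have hPaRa : G.Pred a ⊆ G.Rmv a := Pred_subset_Rmv (mem_R.1 ha).2
  have hRaV : G.Rmv a ⊆ G.V := Rmv_subset_V hwf a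
  -- notation
  set Ra := G.Rmv a with hRa
  set Pa := G.Pred a with hPa
  set Pb := G.Pred b with hPb
  set P' := (G.move a).Pred b with hP'
  have hP'V : ∀ z ∈ P', z ∈ G.V ∧ z ∉ Ra := by
    intro z hz
    have := mem_Pred.1 hz
    have h' := Finset.mem_sdiff.1 (show z ∈ G.V \ Ra from this.1)
    exact ⟨h'.1, h'.2⟩
  have hP'Pb : P' ⊆ Pb := by
    intro z hz
    rcases mem_Pred.1 hz with ⟨hzV, hr⟩
    exact mem_Pred.2 ⟨(hP'V z hz).1, reach_erase_le hwf hr⟩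
  have hErase : (G.move a).erase P' = G.erase (Ra ∪ P') := by
    rw [move_def, erase_erase]
  have hP'pc : (G.move a).PredClosed P' := predClosed_Pred hwfa b
  -- the "through Ra" helper
  have hThrough : ∀ z s : α, z ∈ G.V → z ∉ Ra → s ∈ Ra →
      Relation.ReflTransGen G.arc z s → z ∉ G.left := by
    intro z s hzV hzRa hs hr
    exact not_left_of_reach_rmv' hrel hwf ha hs hzV hzRa hr
  -- claim PB : vertices of Pb \ Ra are either in P' or Right-forced after the two moves
  have claim_PB : ∀ z, z ∈ Pb → z ∉ Ra → z ∈ P' ∨ z ∈ ((G.move a).erase P').ForcR := by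
    intro z hzPb hzRa
    by_cases hzP' : z ∈ P'
    · exact Or.inl hzP'
    rcases mem_Pred.1 hzPb with ⟨hzV, hrzb⟩
    rcases reach_split hwf hrzb hzRa with hclean | ⟨s, hs, hzs, hsb⟩
    · exact (hzP' (mem_Pred.2 ⟨Finset.mem_sdiff.2 ⟨hzV, hzRa⟩, hclean⟩)).elim
    have hzPa : z ∉ Pa := fun hh => hzRa (hPaRa hh)
    have hsPa : s ∉ Pa := by
      intro hh
      exact hzRa (hPaRa (mem_Pred.2 ⟨hzV, hzs.trans (mem_Pred.1 hh).2⟩))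
    have hzs' : Relation.ReflTransGen (G.erase Pa).arc z s := by
      rcases reach_split hwf hzs hzPa with hcl2 | ⟨t, ht, hzt, hts⟩
      · exact hcl2
      · exact (hzRa (hPaRa (mem_Pred.2 ⟨hzV, hzt.trans (mem_Pred.1 ht).2⟩))).elim
    have hznl : z ∉ G.left := not_left_of_reach_rmv hrel hwf ha hs hsPa hzV hzPa hzs'
    refine Or.inr (mem_ForcR.2 ⟨?_, ?_⟩)
    · rw [erase_R, move_R]
      exact Finset.mem_sdiff.2 ⟨Finset.mem_sdiff.2 ⟨mem_R.2 ⟨hzV, hznl⟩, hzRa⟩, hzP'⟩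
    · intro e he
      rcases mem_Pred.1 he with ⟨heV, hre⟩
      rw [hErase] at heV hre
      rcases Finset.mem_sdiff.1 heV with ⟨heV', heRP⟩
      have heRa : e ∉ Ra := fun hh => heRP (Finset.mem_union_left _ hh)
      have hePa : e ∉ Pa := fun hh => heRa (hPaRa hh)
      have hre' : Relation.ReflTransGen (G.erase Pa).arc e z :=
        reach_erase_mono hwf (hPaRa.trans Finset.subset_union_left) hre
      have henl : e ∉ G.left :=
        not_left_of_reach_rmv hrel hwf ha hs hsPa heV' hePa (hre'.trans hzs')
      rw [erase_R, move_R]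
      exact Finset.mem_sdiff.2 ⟨Finset.mem_sdiff.2 ⟨mem_R.2 ⟨heV', henl⟩, heRa⟩,
        fun hh => heRP (Finset.mem_union_right _ hh)⟩
  have hPbsub : ∀ z, z ∈ Pb → z ∉ Ra → z ∈ (G.move a).Rmv b := by
    intro z h1 h2
    rw [Rmv_of_right hbGal]
    rcases claim_PB z h1 h2 with h | h
    · exact Finset.mem_union_left _ h
    · exact Finset.mem_union_right _ (mem_Forc.2 (Or.inr h))
  have hPbnl : ∀ z, z ∈ Pb → z ∉ Ra → z ∉ P' → z ∉ G.left := by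
    intro z h1 h2 h3
    rcases claim_PB z h1 h2 with h | h
    · exact absurd h h3
    · have := (mem_ForcR.1 h).1
      rw [erase_R, move_R] at this
      exact (mem_R.1 (Finset.mem_sdiff.1 (Finset.mem_sdiff.1 this).1).1).2
  apply Finset.Subset.antisymm
  · -- forward inclusion
    refine Finset.union_subset ?_ ?_
    · calc Ra = G.Cl Pa := Rmv_eq_Cl (mem_R.1 ha).2
        _ ⊆ G.Cl (Pa ∪ Pb) := cl_mono hwf Finset.subset_union_left
    rw [Rmv_of_right hbGal]
    refine Finset.union_subset ?_ ?_
    · exact hP'Pb.trans (Finset.subset_union_right.trans Finset.subset_union_left)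
    -- forced part
    intro c hc
    have h1 := forc_erase_not_left hrela hwfa hP'pc c hc
    have hcF := mem_ForcR_of_not_left hc (by
      rw [erase_left]
      exact fun hh => h1 (Finset.mem_sdiff.1 hh).1)
    rcases mem_ForcR.1 hcF with ⟨hc1, hc2⟩
    rw [erase_R, move_R] at hc1
    rcases Finset.mem_sdiff.1 hc1 with ⟨hc1', hcP'⟩
    rcases Finset.mem_sdiff.1 hc1' with ⟨hcR, hcRa⟩
    have hcV := (mem_R.1 hcR).1
    by_cases hcPab : c ∈ Pa ∪ Pb
    · exact Finset.mem_union_left _ hcPab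
    refine Finset.mem_union_right _ (mem_Forc.2 (Or.inr (mem_ForcR.2 ⟨?_, ?_⟩)))
    · rw [erase_R]
      exact Finset.mem_sdiff.2 ⟨hcR, hcPab⟩
    intro b' hb'
    rcases mem_Pred.1 hb' with ⟨hb'V, hrb'⟩
    rcases Finset.mem_sdiff.1 hb'V with ⟨hb'V', hb'Pab⟩
    rw [erase_R]
    refine Finset.mem_sdiff.2 ⟨mem_R.2 ⟨hb'V', ?_⟩, hb'Pab⟩
    by_cases hb'Ra : b' ∈ Ra
    · have hb'Pa : b' ∉ Pa := fun hh => hb'Pab (Finset.mem_union_left _ hh)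
      exact not_left_of_reach_rmv hrel hwf ha hb'Ra hb'Pa hb'V' hb'Pa .refl
    rcases reach_split (hwf.erase (Pa ∪ Pb)) hrb' hb'Ra with hclean | ⟨s, hs, h1, h2⟩
    · rw [erase_erase] at hclean
      have hclean' : Relation.ReflTransGen (G.erase (Ra ∪ P')).arc b' c :=
        reach_erase_mono hwf (by
          intro t ht
          rcases Finset.mem_union.1 ht with h | h
          · exact Finset.mem_union_right _ h
          · exact Finset.mem_union_left _ (Finset.mem_union_right _ (hP'Pb h))) hclean
      have : b' ∈ ((G.move a).erase P').Pred c := by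
        rw [hErase]
        exact mem_Pred.2 ⟨Finset.mem_sdiff.2 ⟨hb'V',
          fun hh => (Finset.mem_union.1 hh).elim hb'Ra
            (fun h3 => hb'Pab (Finset.mem_union_right _ (hP'Pb h3)))⟩, hclean'⟩
      have := hc2 this
      rw [erase_R, move_R] at this
      exact (mem_R.1 (Finset.mem_sdiff.1 (Finset.mem_sdiff.1 this).1).1).2
    · -- path through s ∈ Ra inside G ∖ (Pa ∪ Pb)
      have hsnPab : s ∉ Pa ∪ Pb := reach_erase_endpoint hwf h1 hb'Pab
      have hsPa : s ∉ Pa := fun hh => hsnPab (Finset.mem_union_left _ hh)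
      have hb'Pa : b' ∉ Pa := fun hh => hb'Pab (Finset.mem_union_left _ hh)
      have h1' : Relation.ReflTransGen (G.erase Pa).arc b' s :=
        reach_erase_mono hwf Finset.subset_union_left h1
      exact not_left_of_reach_rmv hrel hwf ha hs hsPa hb'V' hb'Pa h1'
  · -- reverse inclusion
    refine Finset.union_subset (Finset.union_subset ?_ ?_) ?_
    · exact hPaRa.trans Finset.subset_union_left
    · intro z hz
      by_cases hzRa : z ∈ Ra
      · exact Finset.mem_union_left _ hzRa
      · exact Finset.mem_union_right _ (hPbsub z hz hzRa)
    -- forced part of the closure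
    intro c hc
    have hPabpc : G.PredClosed (Pa ∪ Pb) :=
      predClosed_union (predClosed_Pred hwf a) (predClosed_Pred hwf b)
    have hcnl : c ∉ G.left := by
      intro hh
      exact forc_erase_not_left hrel hwf hPabpc c hc hh
    have hcF := mem_ForcR_of_not_left hc (by
      rw [erase_left]
      exact fun hh => hcnl (Finset.mem_sdiff.1 hh).1)
    rcases mem_ForcR.1 hcF with ⟨hc1, hc2⟩
    rw [erase_R] at hc1
    rcases Finset.mem_sdiff.1 hc1 with ⟨hcR, hcPab⟩
    have hcV := (mem_R.1 hcR).1
    by_cases hcRa : c ∈ Ra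
    · exact Finset.mem_union_left _ hcRa
    by_cases hcP' : c ∈ P'
    · refine Finset.mem_union_right _ ?_
      rw [Rmv_of_right hbGal]
      exact Finset.mem_union_left _ hcP'
    refine Finset.mem_union_right _ ?_
    rw [Rmv_of_right hbGal]
    refine Finset.mem_union_right _ (mem_Forc.2 (Or.inr (mem_ForcR.2 ⟨?_, ?_⟩)))
    · rw [erase_R, move_R]
      exact Finset.mem_sdiff.2 ⟨Finset.mem_sdiff.2 ⟨hcR, hcRa⟩, hcP'⟩
    intro e he
    rcases mem_Pred.1 he with ⟨heV, hre⟩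
    rw [hErase] at heV hre
    rcases Finset.mem_sdiff.1 heV with ⟨heV', heRP⟩
    have heRa : e ∉ Ra := fun hh => heRP (Finset.mem_union_left _ hh)
    have heP' : e ∉ P' := fun hh => heRP (Finset.mem_union_right _ hh)
    rw [erase_R, move_R]
    refine Finset.mem_sdiff.2 ⟨Finset.mem_sdiff.2 ⟨mem_R.2 ⟨heV', ?_⟩, heRa⟩, heP'⟩
    by_cases hePab : e ∈ Pa ∪ Pb
    · rcases Finset.mem_union.1 hePab with hh | hh
      · exact absurd (hPaRa hh) heRa
      · exact hPbnl e hh heRa heP'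
    rcases reach_split (hwf.erase (Ra ∪ P')) hre hePab with hclean | ⟨s, hs, h1, h2⟩
    · rw [erase_erase] at hclean
      have hclean' : Relation.ReflTransGen (G.erase (Pa ∪ Pb)).arc e c :=
        reach_erase_mono hwf Finset.subset_union_right hclean
      have := hc2 (mem_Pred.2 ⟨Finset.mem_sdiff.2 ⟨heV', hePab⟩, hclean'⟩)
      rw [erase_R] at this
      exact (mem_R.1 (Finset.mem_sdiff.1 this).1).2
    · have hsRP : s ∉ Ra ∪ P' := reach_erase_endpoint hwf h1 heRP
      have hsRa : s ∉ Ra := fun hh => hsRP (Finset.mem_union_left _ hh)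
      have hsP' : s ∉ P' := fun hh => hsRP (Finset.mem_union_right _ hh)
      have hsPb : s ∈ Pb := by
        rcases Finset.mem_union.1 hs with hh | hh
        · exact absurd (hPaRa hh) hsRa
        · exact hh
      rcases claim_PB s hsPb hsRa with hh | hh
      · exact absurd hh hsP'
      · have he' : e ∈ ((G.move a).erase P').Pred s := by
          rw [hErase]
          exact mem_Pred.2 ⟨Finset.mem_sdiff.2 ⟨heV', heRP⟩, h1⟩
        have := (mem_ForcR.1 hh).2 he'
        rw [erase_R, move_R] at this
        exact (mem_R.1 (Finset.mem_sdiff.1 (Finset.mem_sdiff.1 this).1).1).2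

end Pos
end Influence
namespace Influence
namespace Pos

variable {α : Type} [DecidableEq α]

lemma SuccClosed.erase {G : Pos α} (hwf : G.WF) {W : Finset α} (h : G.SuccClosed W)
    (T : Finset α) : (G.erase T).SuccClosed W :=
  fun _ _ ha hab => h ha ((arc_erase hwf).1 hab).1

lemma mem_Pred_of_mem_Rmv_left {G : Pos α} (hrel : G.Relevant) (hwf : G.WF) {u : α}
    (hu : u ∈ G.R) {z : α} (h : z ∈ G.Rmv u) (hz : z ∈ G.left) : z ∈ G.Pred u := by
  by_contra hh
  have h2 := (mem_ForcR.1 (mem_ForcR_of_mem_Rmv hrel hwf hu h hh)).1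
  rw [erase_R] at h2
  exact (mem_R.1 (Finset.mem_sdiff.1 h2).1).2 hz

lemma sym {G : Pos α} (hrel : G.Relevant) (hwf : G.WF) {x u : α} (hx : x ∈ G.left)
    (hu : u ∈ G.R) (hxu : x ∉ G.Rmv u) : u ∉ G.Rmv x := by
  intro h
  rw [Rmv_of_left hx] at h
  rcases Finset.mem_union.1 h with h' | h'
  · exact hxu (Pred_subset_Rmv (mem_R.1 hu).2
      (mem_Pred.2 ⟨hwf.2 hx, (mem_Succ.1 h').2⟩))
  · exact (mem_R.1 hu).2 (forc_erase_in_left hrel hwf (succClosed_Succ hwf x) u h')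

lemma opp {G : Pos α} (hrel : G.Relevant) (hwf : G.WF) {x u : α} (hx : x ∈ G.left)
    (hu : u ∈ G.R) (hxu : x ∉ G.Rmv u) (hux : u ∉ G.Rmv x) :
    (G.move u).Rmv x = G.Rmv x := by
  have hxV := hwf.2 hx
  have huV := (mem_R.1 hu).1
  have hunl := (mem_R.1 hu).2
  have hxGul : x ∈ (G.move u).left := by
    rw [move_left]; exact Finset.mem_sdiff.2 ⟨hx, hxu⟩
  have huS : u ∉ G.Succ x := fun h => hux (Succ_subset_Rmv hx h)
  set S := G.Succ x with hS
  set Ru := G.Rmv u with hRu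
  have hscmv : (G.move u).SuccClosed S :=
    SuccClosed.erase hwf (succClosed_Succ hwf x) Ru
  have hErase : (G.move u).erase S = G.erase (Ru ∪ S) := by
    rw [move_def, erase_erase]
  -- Claim 1: the successor set of x is unchanged
  have hSucc : (G.move u).Succ x = S := by
    apply Finset.Subset.antisymm
    · intro w hw
      rcases mem_Succ.1 hw with ⟨hwV, hr⟩
      exact mem_Succ.2 ⟨(Finset.mem_sdiff.1 hwV).1, reach_erase_le hwf hr⟩
    · intro w hw
      rcases mem_Succ.1 hw with ⟨hwV, hr⟩
      rcases reach_split hwf hr hxu with hclean | ⟨s, hs, h1, h2⟩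
      · exact mem_Succ.2 ⟨Finset.mem_sdiff.2 ⟨hwV,
          reach_erase_endpoint hwf hclean hxu⟩, hclean⟩
      · exact absurd hx (not_left_of_reach_rmv' hrel hwf hu hs hxV hxu h1)
  -- Claim 2: the forced sets agree
  have hForc : ((G.move u).erase S).Forc = (G.erase S).Forc := by
    apply Finset.Subset.antisymm
    · intro z hz
      have hz1 : z ∈ (G.move u).left :=
        forc_erase_in_left (Relevant.move hwf u) (hwf.move u) hscmv z hz
      rw [move_left] at hz1
      rcases Finset.mem_sdiff.1 hz1 with ⟨hzl, hzRu⟩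
      have hzV := hwf.2 hzl
      have hzS : z ∉ S := by
        have := Forc_subset_V ((hwf.move u).erase S) hz
        rw [erase_V] at this
        exact (Finset.mem_sdiff.1 this).2
      have hzF := mem_ForcL_of_left hz (by
        rw [erase_left, move_left]
        exact Finset.mem_sdiff.2 ⟨Finset.mem_sdiff.2 ⟨hzl, hzRu⟩, hzS⟩)
      have hz2 := (mem_ForcL.1 hzF).2
      refine mem_Forc.2 (Or.inl (mem_ForcL.2 ⟨?_, ?_⟩))
      · rw [erase_left]
        exact Finset.mem_sdiff.2 ⟨hzl, hzS⟩
      intro w hw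
      rcases mem_Succ.1 hw with ⟨hwV, hr⟩
      rcases Finset.mem_sdiff.1 hwV with ⟨hwV', hwS⟩
      rcases reach_split (hwf.erase S) hr hzRu with hclean | ⟨s, hs, h1, h2⟩
      · rw [erase_erase] at hclean
        have hzSR : z ∉ S ∪ Ru := fun hh => (Finset.mem_union.1 hh).elim hzS hzRu
        have hwSR : w ∉ S ∪ Ru := reach_erase_endpoint hwf hclean hzSR
        have hclean2 : Relation.ReflTransGen (G.erase (Ru ∪ S)).arc z w := by
          rwa [Finset.union_comm Ru S]
        have hmem : w ∈ ((G.move u).erase S).Succ z := by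
          rw [hErase]
          exact mem_Succ.2 ⟨Finset.mem_sdiff.2 ⟨hwV',
            by rw [Finset.union_comm Ru S]; exact hwSR⟩, hclean2⟩
        have := hz2 hmem
        rw [erase_left, move_left] at this
        exact Finset.mem_sdiff.2
          ⟨(Finset.mem_sdiff.1 (Finset.mem_sdiff.1 this).1).1, hwS⟩
      · exact absurd hzl
          (not_left_of_reach_rmv' hrel hwf hu hs hzV hzRu (reach_erase_le hwf h1))
    · intro z hz
      have hzl : z ∈ G.left := forc_erase_in_left hrel hwf (succClosed_Succ hwf x) z hz
      have hzV := hwf.2 hzl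
      have hzS : z ∉ S := by
        have := Forc_subset_V (hwf.erase S) hz
        rw [erase_V] at this
        exact (Finset.mem_sdiff.1 this).2
      have hzF := mem_ForcL_of_left hz (by
        rw [erase_left]; exact Finset.mem_sdiff.2 ⟨hzl, hzS⟩)
      have hz2 := (mem_ForcL.1 hzF).2
      have hzRu : z ∉ Ru := by
        intro hh
        have hzPu := mem_Pred_of_mem_Rmv_left hrel hwf hu hh hzl
        rcases mem_Pred.1 hzPu with ⟨-, hzu⟩
        rcases reach_split hwf hzu hzS with hclean | ⟨s, hs, h1, h2⟩
        · have : u ∈ (G.erase S).Succ z := mem_Succ.2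
            ⟨Finset.mem_sdiff.2 ⟨huV, huS⟩, hclean⟩
          have := hz2 this
          rw [erase_left] at this
          exact hunl (Finset.mem_sdiff.1 this).1
        · exact hux (Succ_subset_Rmv hx
            (mem_Succ.2 ⟨huV, ((mem_Succ.1 hs).2).trans h2⟩))
      refine mem_Forc.2 (Or.inl (mem_ForcL.2 ⟨?_, ?_⟩))
      · rw [erase_left, move_left]
        exact Finset.mem_sdiff.2 ⟨Finset.mem_sdiff.2 ⟨hzl, hzRu⟩, hzS⟩
      intro w hw
      rcases mem_Succ.1 hw with ⟨hwV, hr⟩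
      rw [hErase] at hwV hr
      rcases Finset.mem_sdiff.1 hwV with ⟨hwV', hwRS⟩
      have hr' : Relation.ReflTransGen (G.erase S).arc z w :=
        reach_erase_mono hwf Finset.subset_union_right hr
      have : w ∈ (G.erase S).Succ z := mem_Succ.2
        ⟨Finset.mem_sdiff.2 ⟨hwV', fun hh => hwRS (Finset.mem_union_right _ hh)⟩, hr'⟩
      have hwl := hz2 this
      rw [erase_left] at hwl
      rw [erase_left, move_left]
      exact Finset.mem_sdiff.2 ⟨Finset.mem_sdiff.2 ⟨(Finset.mem_sdiff.1 hwl).1,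
        fun hh => hwRS (Finset.mem_union_left _ hh)⟩, (Finset.mem_sdiff.1 hwl).2⟩
  rw [Rmv_of_left hxGul, hSucc, hForc, ← Rmv_of_left hx]

lemma oppdual {G : Pos α} (hrel : G.Relevant) (hwf : G.WF) {x u : α} (hx : x ∈ G.left)
    (hu : u ∈ G.R) (hxu : x ∉ G.Rmv u) (hux : u ∉ G.Rmv x) :
    (G.move x).Rmv u = G.Rmv u := by
  have hxV := hwf.2 hx
  have huV := (mem_R.1 hu).1
  have h1 : u ∈ G.op.left := by
    rw [op_left]; exact Finset.mem_sdiff.2 ⟨huV, (mem_R.1 hu).2⟩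
  have h2 : x ∈ G.op.R := by rw [op_R G hwf]; exact hx
  have h3 : u ∉ G.op.Rmv x := by rw [Rmv_op hwf hxV]; exact hux
  have h4 : x ∉ G.op.Rmv u := by rw [Rmv_op hwf huV]; exact hxu
  have h := opp (hrel.op hwf) hwf.op h1 h2 h3 h4
  rw [move_op hwf hxV, Rmv_op (hwf.move x)
    (by rw [move_V]; exact Finset.mem_sdiff.2 ⟨huV, hux⟩), Rmv_op hwf huV] at h
  exact h

lemma comm_LR {G : Pos α} (hrel : G.Relevant) (hwf : G.WF) {x u : α} (hx : x ∈ G.left)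
    (hu : u ∈ G.R) (hxu : x ∉ G.Rmv u) (hux : u ∉ G.Rmv x) :
    (G.move u).move x = (G.move x).move u := by
  have e1 : (G.move u).move x = G.erase (G.Rmv u ∪ G.Rmv x) := by
    rw [move_def (G.move u) x, opp hrel hwf hx hu hxu hux, move_def, erase_erase]
  have e2 : (G.move x).move u = G.erase (G.Rmv x ∪ G.Rmv u) := by
    rw [move_def (G.move x) u, oppdual hrel hwf hx hu hxu hux, move_def, erase_erase]
  rw [e1, e2, Finset.union_comm]

lemma move_move_eq_cl {G : Pos α} (hrel : G.Relevant) (hwf : G.WF) {a b : α}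
    (ha : a ∈ G.R) (hb : b ∈ G.R) (hbRa : b ∉ G.Rmv a) :
    (G.move a).move b = G.erase (G.Cl (G.Pred a ∪ G.Pred b)) := by
  show (G.erase (G.Rmv a)).erase ((G.move a).Rmv b) = _
  rw [erase_erase, clo hrel hwf ha hb hbRa]

lemma comm_RR {G : Pos α} (hrel : G.Relevant) (hwf : G.WF) {u y : α}
    (hu : u ∈ G.R) (hy : y ∈ G.R) (hyRu : y ∉ G.Rmv u) (huRy : u ∉ G.Rmv y) :
    (G.move u).move y = (G.move y).move u := by
  rw [move_move_eq_cl hrel hwf hu hy hyRu, move_move_eq_cl hrel hwf hy hu huRy,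
    Finset.union_comm]

lemma abs {G : Pos α} (hrel : G.Relevant) (hwf : G.WF) {u y : α}
    (hu : u ∈ G.R) (hy : y ∈ G.R) (hyRu : y ∉ G.Rmv u) (huRy : u ∈ G.Rmv y) :
    (G.move u).move y = G.move y := by
  rw [move_move_eq_cl hrel hwf hu hy hyRu]
  rw [cl_eq hrel hwf hy Finset.subset_union_right
    (Finset.union_subset ((Pred_subset_Rmv (mem_R.1 hu).2).trans
      (Rmv_subset_of_mem hrel hwf hy hu huRy)) (Pred_subset_Rmv (mem_R.1 hy).2))
    (predClosed_union (predClosed_Pred hwf u) (predClosed_Pred hwf y))]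
  rw [move_def]

lemma nest {G : Pos α} (hrel : G.Relevant) (hwf : G.WF) {u y : α}
    (hu : u ∈ G.R) (hy : y ∈ G.R) (hyRu : y ∈ G.Rmv u) (huRy : u ∉ G.Rmv y) :
    (G.move y).move u = G.move u := by
  rw [move_move_eq_cl hrel hwf hy hu huRy]
  rw [cl_eq hrel hwf hu Finset.subset_union_right
    (Finset.union_subset ((Pred_subset_Rmv (mem_R.1 hy).2).trans
      (Rmv_subset_of_mem hrel hwf hu hy hyRu)) (Pred_subset_Rmv (mem_R.1 hu).2))
    (predClosed_union (predClosed_Pred hwf y) (predClosed_Pred hwf u))]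
  rw [move_def]

end Pos
end Influence
namespace Influence
namespace Pos

variable {α : Type} [DecidableEq α]

theorem core (n : ℕ) : ∀ G : Pos α, G.V.card ≤ n → G.WF → G.Relevant →
    (∀ u ∈ G.R, (G.move u).sL1 ≤ G.sL1) ∧ (∀ u ∈ G.R, (G.move u).sL2 ≤ G.sL2) ∧
    G.sL2 ≤ G.sL1 := by
  induction n using Nat.strong_induction_on with
  | _ n ih =>
  intro G hn hwf hrel
  have IH : ∀ H : Pos α, H.V.card < G.V.card → H.WF → H.Relevant →
      (∀ u ∈ H.R, (H.move u).sL1 ≤ H.sL1) ∧ (∀ u ∈ H.R, (H.move u).sL2 ≤ H.sL2) ∧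
      H.sL2 ≤ H.sL1 :=
    fun H hH hwf' hrel' => ih H.V.card (lt_of_lt_of_le hH hn) H le_rfl hwf' hrel'
  have hA1 : ∀ u ∈ G.R, (G.move u).sL1 ≤ G.sL1 := by
    intro u hu
    have huV := (mem_R.1 hu).1
    by_cases hL' : (G.move u).left.Nonempty
    · rw [sL1_eq (hwf.move u) hL']
      refine Finset.sup_le ?_
      intro x hx
      rw [move_left] at hx
      rcases Finset.mem_sdiff.1 hx with ⟨hxl, hxRu⟩
      have hux := sym hrel hwf hxl hu hxRu
      have hxV := hwf.2 hxl
      rw [opp hrel hwf hxl hu hxRu hux,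
        comm_LR hrel hwf hxl hu hxRu hux]
      have hIHx := IH (G.move x) (move_card_lt hwf hxV) (hwf.move x)
        (Relevant.move hwf x)
      have hB1x := hIHx.2.1 u (by
        rw [move_R]; exact Finset.mem_sdiff.2 ⟨hu, hux⟩)
      calc (G.Rmv x).card + ((G.move x).move u).sL2
          ≤ (G.Rmv x).card + (G.move x).sL2 := Nat.add_le_add_left hB1x _
        _ ≤ G.sL1 := term_le_sL1 hwf hxl
    · rw [sL1_empty (Finset.not_nonempty_iff_eq_empty.1 hL')]
      exact Nat.zero_le _
  have hB1 : ∀ u ∈ G.R, (G.move u).sL2 ≤ G.sL2 := by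
    intro u hu
    have huV := (mem_R.1 hu).1
    by_cases hR' : (G.move u).R.Nonempty
    swap
    · rw [sL2_empty (Finset.not_nonempty_iff_eq_empty.1 hR')]
      exact Nat.zero_le _
    have hRne : G.R.Nonempty := ⟨u, hu⟩
    obtain ⟨y, hy, hmin⟩ := Finset.exists_mem_eq_inf' hRne (fun y => (G.move y).sL1)
    have hsL2 : G.sL2 = (G.move y).sL1 := by rw [sL2_eq hwf hRne]; exact hmin
    have hyV := (mem_R.1 hy).1
    have hIHy := IH (G.move y) (move_card_lt hwf hyV) (hwf.move y)
      (Relevant.move hwf y)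
    by_cases hyRu : y ∈ G.Rmv u
    · by_cases huRy : u ∈ G.Rmv y
      · have hmveq : G.move u = G.move y := by
          show G.erase (G.Rmv u) = G.erase (G.Rmv y)
          rw [Finset.Subset.antisymm (Rmv_subset_of_mem hrel hwf hy hu huRy)
            (Rmv_subset_of_mem hrel hwf hu hy hyRu)]
        rw [hmveq, hsL2]
        exact hIHy.2.2
      · rw [← nest hrel hwf hu hy hyRu huRy, hsL2]
        have hB1y := hIHy.2.1 u (by
          rw [move_R]; exact Finset.mem_sdiff.2 ⟨hu, huRy⟩)
        exact le_trans hB1y hIHy.2.2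
    · have hyR' : y ∈ (G.move u).R := by
        rw [move_R]; exact Finset.mem_sdiff.2 ⟨hy, hyRu⟩
      have hle : (G.move u).sL2 ≤ ((G.move u).move y).sL1 := sL2_le (hwf.move u) hyR'
      by_cases huRy : u ∈ G.Rmv y
      · rw [abs hrel hwf hu hy hyRu huRy] at hle
        rw [hsL2]
        exact hle
      · rw [comm_RR hrel hwf hu hy hyRu huRy] at hle
        have hA1y := hIHy.1 u (by
          rw [move_R]; exact Finset.mem_sdiff.2 ⟨hu, huRy⟩)
        rw [hsL2]
        exact le_trans hle hA1y
  refine ⟨hA1, hB1, ?_⟩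
  rcases G.R.eq_empty_or_nonempty with h | ⟨y, hy⟩
  · rw [sL2_empty h]
    exact Nat.zero_le _
  · exact le_trans (sL2_le hwf hy) (hA1 y hy)

end Pos
end Influence


/-- influence is a nonzugzwang game. -/
theorem influence_nonzugzwang {α : Type} [DecidableEq α] (G : Pos α)
    (hwf : G.WF) (hrel : G.Relevant) :
    G.sL2 ≤ G.sL1 ∧ G.sR2 ≤ G.sR1 ∧ G.Rs ≤ G.Ls := by
  have h1 := (core G.V.card G le_rfl hwf hrel).2.2
  have h2 := (core G.op.V.card G.op le_rfl hwf.op (hrel.op hwf)).2.2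
  rw [sL1_op hwf, sL2_op hwf] at h2
  refine ⟨h1, h2, ?_⟩
  have h1' : (G.sL2 : ℤ) ≤ (G.sL1 : ℤ) := Int.ofNat_le.2 h1
  have h2' : (G.sR2 : ℤ) ≤ (G.sR1 : ℤ) := Int.ofNat_le.2 h2
  unfold Pos.Rs Pos.Ls
  omega
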